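/- Let α, β ∈ ℝ with β ≠ 0, and let u, v : ℝ² → ℝ be smooth functions of (x,y) satisfying the pair of reduction equations ∂_y(u_y + u_x v_x) + ∂_x(u_y v_x + u_x v_x² + u u_x) = (3β)⁻¹ v_{xxx} and v_x = α u everywhere. Then u satisfies the second-order equation u_{yy} + ∂_x( 2α u_y u + α² u_x u² + u u_x − (α/(3β)) u_x ) = 0. -/

import Mathlib

/-- Partial derivative in `x` of a function on `ℝ² = (x,y)`. -/
noncomputable def pdx (f : ℝ × ℝ → ℝ) (q : ℝ × ℝ) : ℝ :=
  deriv (fun s => f (s, q.2)) q.1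

/-- Partial derivative in `y` of a function on `ℝ² = (x,y)`. -/
noncomputable def pdy (f : ℝ × ℝ → ℝ) (q : ℝ × ℝ) : ℝ :=
  deriv (fun s => f (q.1, s)) q.2


lemma hasDerivAt_slice_x (f : ℝ × ℝ → ℝ) (hf : Differentiable ℝ f) (q : ℝ × ℝ) :
    HasDerivAt (fun s => f (s, q.2)) (pdx f q) q.1 := by
  have hg : HasDerivAt (fun s => ((s, q.2) : ℝ × ℝ)) ((1 : ℝ), (0 : ℝ)) q.1 :=
    (hasDerivAt_id q.1).prodMk (hasDerivAt_const q.1 q.2)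
  have h := (hf (q.1, q.2)).hasFDerivAt.comp_hasDerivAt q.1 hg
  have : pdx f q = fderiv ℝ f (q.1, q.2) ((1 : ℝ), (0 : ℝ)) := h.deriv
  rw [this]; exact h

lemma hasDerivAt_slice_y (f : ℝ × ℝ → ℝ) (hf : Differentiable ℝ f) (q : ℝ × ℝ) :
    HasDerivAt (fun s => f (q.1, s)) (pdy f q) q.2 := by
  have hg : HasDerivAt (fun s => ((q.1, s) : ℝ × ℝ)) ((0 : ℝ), (1 : ℝ)) q.2 :=
    (hasDerivAt_const q.2 q.1).prodMk (hasDerivAt_id q.2)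
  have h := (hf (q.1, q.2)).hasFDerivAt.comp_hasDerivAt q.2 hg
  have : pdy f q = fderiv ℝ f (q.1, q.2) ((0 : ℝ), (1 : ℝ)) := h.deriv
  rw [this]; exact h

lemma pdx_eq_fderiv (f : ℝ × ℝ → ℝ) (hf : Differentiable ℝ f) (q : ℝ × ℝ) :
    pdx f q = fderiv ℝ f q ((1 : ℝ), (0 : ℝ)) := by
  have hg : HasDerivAt (fun s => ((s, q.2) : ℝ × ℝ)) ((1 : ℝ), (0 : ℝ)) q.1 :=
    (hasDerivAt_id q.1).prodMk (hasDerivAt_const q.1 q.2)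
  exact ((hf (q.1, q.2)).hasFDerivAt.comp_hasDerivAt q.1 hg).deriv

lemma pdy_eq_fderiv (f : ℝ × ℝ → ℝ) (hf : Differentiable ℝ f) (q : ℝ × ℝ) :
    pdy f q = fderiv ℝ f q ((0 : ℝ), (1 : ℝ)) := by
  have hg : HasDerivAt (fun s => ((q.1, s) : ℝ × ℝ)) ((0 : ℝ), (1 : ℝ)) q.2 :=
    (hasDerivAt_const q.2 q.1).prodMk (hasDerivAt_id q.2)
  exact ((hf (q.1, q.2)).hasFDerivAt.comp_hasDerivAt q.2 hg).deriv

lemma fderiv_apply_smooth (f : ℝ × ℝ → ℝ) (hf : ContDiff ℝ (⊤ : ℕ∞) f) (w : ℝ × ℝ) :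
    ContDiff ℝ (⊤ : ℕ∞) (fun s => fderiv ℝ f s w) :=
  (hf.fderiv_right (by exact_mod_cast le_top)).clm_apply contDiff_const

lemma pdx_fderiv_apply (f : ℝ × ℝ → ℝ) (hf : ContDiff ℝ (⊤ : ℕ∞) f) (w : ℝ × ℝ) (q : ℝ × ℝ) :
    pdx (fun s => fderiv ℝ f s w) q = fderiv ℝ (fderiv ℝ f) q ((1 : ℝ), (0 : ℝ)) w := by
  have hD : ContDiff ℝ (⊤ : ℕ∞) (fderiv ℝ f) := hf.fderiv_right (by exact_mod_cast le_top)
  have h : HasFDerivAt (fun s => fderiv ℝ f s w)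
      ((ContinuousLinearMap.apply ℝ ℝ w).comp (fderiv ℝ (fderiv ℝ f) q)) q :=
    (ContinuousLinearMap.apply ℝ ℝ w).hasFDerivAt.comp q
      ((hD.differentiable (by simp)) q).hasFDerivAt
  rw [pdx_eq_fderiv _ ((fderiv_apply_smooth f hf w).differentiable (by simp)) q, h.fderiv]
  rfl

lemma pdy_fderiv_apply (f : ℝ × ℝ → ℝ) (hf : ContDiff ℝ (⊤ : ℕ∞) f) (w : ℝ × ℝ) (q : ℝ × ℝ) :
    pdy (fun s => fderiv ℝ f s w) q = fderiv ℝ (fderiv ℝ f) q ((0 : ℝ), (1 : ℝ)) w := by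
  have hD : ContDiff ℝ (⊤ : ℕ∞) (fderiv ℝ f) := hf.fderiv_right (by exact_mod_cast le_top)
  have h : HasFDerivAt (fun s => fderiv ℝ f s w)
      ((ContinuousLinearMap.apply ℝ ℝ w).comp (fderiv ℝ (fderiv ℝ f) q)) q :=
    (ContinuousLinearMap.apply ℝ ℝ w).hasFDerivAt.comp q
      ((hD.differentiable (by simp)) q).hasFDerivAt
  rw [pdy_eq_fderiv _ ((fderiv_apply_smooth f hf w).differentiable (by simp)) q, h.fderiv]
  rfl

lemma pdx_fun_eq (f : ℝ × ℝ → ℝ) (hf : ContDiff ℝ (⊤ : ℕ∞) f) :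
    pdx f = fun s => fderiv ℝ f s ((1 : ℝ), (0 : ℝ)) :=
  funext fun q => pdx_eq_fderiv f (hf.differentiable (by simp)) q

lemma pdy_fun_eq (f : ℝ × ℝ → ℝ) (hf : ContDiff ℝ (⊤ : ℕ∞) f) :
    pdy f = fun s => fderiv ℝ f s ((0 : ℝ), (1 : ℝ)) :=
  funext fun q => pdy_eq_fderiv f (hf.differentiable (by simp)) q

lemma contDiff_pdx (f : ℝ × ℝ → ℝ) (hf : ContDiff ℝ (⊤ : ℕ∞) f) :
    ContDiff ℝ (⊤ : ℕ∞) (pdx f) := by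
  rw [pdx_fun_eq f hf]; exact fderiv_apply_smooth f hf _

lemma contDiff_pdy (f : ℝ × ℝ → ℝ) (hf : ContDiff ℝ (⊤ : ℕ∞) f) :
    ContDiff ℝ (⊤ : ℕ∞) (pdy f) := by
  rw [pdy_fun_eq f hf]; exact fderiv_apply_smooth f hf _

lemma clairaut (f : ℝ × ℝ → ℝ) (hf : ContDiff ℝ (⊤ : ℕ∞) f) (q : ℝ × ℝ) :
    pdx (pdy f) q = pdy (pdx f) q := by
  have hD : ContDiff ℝ (⊤ : ℕ∞) (fderiv ℝ f) := hf.fderiv_right (by exact_mod_cast le_top)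
  have hsym := second_derivative_symmetric
    (f := f) (f' := fderiv ℝ f) (f'' := fderiv ℝ (fderiv ℝ f) q)
    (fun y => (hf.differentiable (by simp) y).hasFDerivAt)
    ((hD.differentiable (by simp) q).hasFDerivAt)
  rw [pdx_fun_eq f hf, pdy_fun_eq f hf, pdx_fderiv_apply f hf, pdy_fderiv_apply f hf]
  exact hsym _ _

/-- Imposing the order `k = 3` reduction
`∂_y(u_y + u_x v_x) + ∂_x(u_y v_x + u_x v_x² + u u_x) = (3β)⁻¹ v_{xxx}` together with
the interpolating-system constraint `v_x = α u` yields the second-order equation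
`u_{yy} + ∂_x(2α u_y u + α² u_x u² + u u_x − (α/(3β)) u_x) = 0`. -/
theorem second_order_equation_from_reductions (α β : ℝ) (hβ : β ≠ 0) (u v : ℝ × ℝ → ℝ)
    (hu : ContDiff ℝ (⊤ : ℕ∞) u) (hv : ContDiff ℝ (⊤ : ℕ∞) v)
    (h3 : ∀ q : ℝ × ℝ,
      pdy (fun s => pdy u s + pdx u s * pdx v s) q
        + pdx (fun s => pdy u s * pdx v s + pdx u s * (pdx v s) ^ 2 + u s * pdx u s) q
        = (3 * β)⁻¹ * pdx (pdx (pdx v)) q)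
    (h1 : ∀ q : ℝ × ℝ, pdx v q = α * u q) :
    ∀ q : ℝ × ℝ,
      pdy (pdy u) q
        + pdx (fun s => 2 * α * pdy u s * u s + α ^ 2 * pdx u s * (u s) ^ 2
            + u s * pdx u s - (α / (3 * β)) * pdx u s) q = 0 := by
  intro q
  have hud : Differentiable ℝ u := hu.differentiable (by simp)
  have hdux : Differentiable ℝ (pdx u) :=
    (contDiff_pdx u hu).differentiable (by simp)
  have hduy : Differentiable ℝ (pdy u) :=
    (contDiff_pdy u hu).differentiable (by simp)
  have hy_u := hasDerivAt_slice_y u hud q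
  have hy_ux := hasDerivAt_slice_y (pdx u) hdux q
  have hy_uy := hasDerivAt_slice_y (pdy u) hduy q
  have hx_u := hasDerivAt_slice_x u hud q
  have hx_ux := hasDerivAt_slice_x (pdx u) hdux q
  have hx_uy := hasDerivAt_slice_x (pdy u) hduy q
  -- rewrite the functions appearing in h3 using h1
  have hFeq : (fun s => pdy u s + pdx u s * pdx v s)
      = fun s => pdy u s + pdx u s * (α * u s) := by
    funext s; rw [h1]
  have hGeq : (fun s => pdy u s * pdx v s + pdx u s * (pdx v s) ^ 2 + u s * pdx u s)
      = fun s => pdy u s * (α * u s) + pdx u s * (α * u s) ^ 2 + u s * pdx u s := by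
    funext s; rw [h1]
  have E1 : pdy (fun s => pdy u s + pdx u s * (α * u s)) q
      = pdy (pdy u) q + (pdy (pdx u) q * (α * u q) + pdx u q * (α * pdy u q)) :=
    (hy_uy.add (hy_ux.mul (hy_u.const_mul α))).deriv
  have E2 : pdx (fun s => pdy u s * (α * u s) + pdx u s * (α * u s) ^ 2 + u s * pdx u s) q
      = (pdx (pdy u) q * (α * u q) + pdy u q * (α * pdx u q))
        + (pdx (pdx u) q * (α * u q) ^ 2
            + pdx u q * (2 * (α * u q) ^ 1 * (α * pdx u q)))
        + (pdx u q * pdx u q + u q * pdx (pdx u) q) :=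
    (((hx_uy.mul (hx_u.const_mul α)).add
      (hx_ux.mul ((hx_u.const_mul α).pow 2))).add (hx_u.mul hx_ux)).deriv
  have E3 : pdx (pdx (pdx v)) q = α * pdx (pdx u) q := by
    have e1 : pdx v = fun s => α * u s := funext h1
    have e2 : pdx (fun s : ℝ × ℝ => α * u s) = fun s => α * pdx u s :=
      funext fun p => deriv_const_mul_field α
    have e3 : pdx (fun s : ℝ × ℝ => α * pdx u s) = fun s => α * pdx (pdx u) s :=
      funext fun p => deriv_const_mul_field α
    rw [e1, e2, e3]
  have E4 : pdx (fun s => 2 * α * pdy u s * u s + α ^ 2 * pdx u s * (u s) ^ 2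
        + u s * pdx u s - (α / (3 * β)) * pdx u s) q
      = ((2 * α * pdx (pdy u) q) * u q + (2 * α * pdy u q) * pdx u q
          + ((α ^ 2 * pdx (pdx u) q) * (u q) ^ 2
              + (α ^ 2 * pdx u q) * (2 * (u q) ^ 1 * pdx u q))
          + (pdx u q * pdx u q + u q * pdx (pdx u) q))
        - (α / (3 * β)) * pdx (pdx u) q :=
    ((((hx_uy.const_mul (2 * α)).mul hx_u).add
      ((hx_ux.const_mul (α ^ 2)).mul (hx_u.pow 2))).add (hx_u.mul hx_ux)).sub
        (hx_ux.const_mul (α / (3 * β))) |>.deriv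
  have hcl := clairaut u hu q
  have h := h3 q
  rw [hFeq, hGeq, E1, E2, E3] at h
  rw [E4]
  linear_combination h + α * u q * hcl
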